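/- Suppose y ≤ w in S_d and i in [1,d] satisfies y(i) = w(i) and inv_i(y) = inv_i(w) (i.e., i is cancellable for the interval [y,w]). Then for any x with y ≤ x ≤ w in Bruhat order, x(i) = y(i) and inv_i(x) = inv_i(y). -/

import Mathlib

open Equiv Finset

/-- `inv_i(w) = |{i' < i : w(i') > w(i)}|`. -/
def invi {d : ℕ} (w : Perm (Fin d)) (i : Fin d) : ℕ :=
  (Finset.univ.filter (fun i' => i' < i ∧ w i < w i')).card

/-- `Inv_i(w) = |{i' > i : w(i') < w(i)}|`. -/
def Invi {d : ℕ} (w : Perm (Fin d)) (i : Fin d) : ℕ :=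
  (Finset.univ.filter (fun i' => i < i' ∧ w i' < w i)).card

/-- `s` is one of the standard Coxeter generators (adjacent transpositions) of `S_d`. -/
def IsAdjTrans {d : ℕ} (s : Perm (Fin d)) : Prop :=
  ∃ (i : ℕ) (h : i + 1 < d), s = Equiv.swap ⟨i, Nat.lt_of_succ_lt h⟩ ⟨i + 1, h⟩

/-- Coxeter length: minimal length of an expression of `w` as a product of
adjacent transpositions. -/
noncomputable def len {d : ℕ} (w : Perm (Fin d)) : ℕ :=
  sInf {n | ∃ l : List (Perm (Fin d)),
    l.length = n ∧ (∀ s ∈ l, IsAdjTrans s) ∧ l.prod = w}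

/-- Bruhat order: `y ≤ w` iff some reduced word for `w` has a subword with product `y`. -/
def BruhatLE {d : ℕ} (y w : Perm (Fin d)) : Prop :=
  ∃ l : List (Perm (Fin d)), (∀ s ∈ l, IsAdjTrans s) ∧ l.length = len w ∧ l.prod = w ∧
    ∃ l' : List (Perm (Fin d)), List.Sublist l' l ∧ l'.prod = y

namespace Stmt5Aux

variable {d : ℕ}

/-- number of inversions -/
def N (u : Perm (Fin d)) : ℕ :=
  (Finset.univ.filter (fun pq : Fin d × Fin d => pq.1 < pq.2 ∧ u pq.2 < u pq.1)).card

/-- rank function: positions `< a` with value `≥ b` -/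
def R (u : Perm (Fin d)) (a b : ℕ) : ℕ :=
  (Finset.univ.filter (fun i' : Fin d => (i' : ℕ) < a ∧ b ≤ (u i' : ℕ))).card

lemma swap_val {t : ℕ} (h : t + 1 < d) (v : Fin d) :
    ((Equiv.swap ⟨t, Nat.lt_of_succ_lt h⟩ ⟨t + 1, h⟩ : Perm (Fin d)) v : ℕ) =
      if (v : ℕ) = t then t + 1 else if (v : ℕ) = t + 1 then t else (v : ℕ) := by
  rcases eq_or_ne v ⟨t, Nat.lt_of_succ_lt h⟩ with rfl | hv1
  · simp [Equiv.swap_apply_left]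
  · rcases eq_or_ne v ⟨t + 1, h⟩ with rfl | hv2
    · rw [Equiv.swap_apply_right]
      rw [show ((⟨t + 1, h⟩ : Fin d) : ℕ) = t + 1 from rfl, if_neg (by omega), if_pos rfl]
    · rw [Equiv.swap_apply_of_ne_of_ne hv1 hv2]
      rw [if_neg (fun hc => hv1 (Fin.ext hc)), if_neg (fun hc => hv2 (Fin.ext hc))]

lemma N_one : N (1 : Perm (Fin d)) = 0 := by
  rw [N, Finset.card_eq_zero, Finset.filter_eq_empty_iff]
  rintro ⟨p, q⟩ _
  simp only [Perm.one_apply]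
  rintro ⟨h1, h2⟩
  exact absurd h2 (lt_asymm h1)

lemma N_mul_swap_asc {t : ℕ} (h : t + 1 < d) (u : Perm (Fin d))
    (hPQ : ((u⁻¹ ⟨t, Nat.lt_of_succ_lt h⟩ : Fin d) : ℕ) < ((u⁻¹ ⟨t + 1, h⟩ : Fin d) : ℕ)) :
    N (Equiv.swap ⟨t, Nat.lt_of_succ_lt h⟩ ⟨t + 1, h⟩ * u) = N u + 1 := by
  set T : Fin d := ⟨t, Nat.lt_of_succ_lt h⟩ with hT
  set T1 : Fin d := ⟨t + 1, h⟩ with hT1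
  set P := u⁻¹ T with hPdef
  set Q := u⁻¹ T1 with hQdef
  have huP : (u P : ℕ) = t := by rw [hPdef, Perm.inv_def, Equiv.apply_symm_apply]
  have huQ : (u Q : ℕ) = t + 1 := by rw [hQdef, Perm.inv_def, Equiv.apply_symm_apply]
  have key : Finset.univ.filter
        (fun pq : Fin d × Fin d => pq.1 < pq.2 ∧
          (Equiv.swap T T1 * u) pq.2 < (Equiv.swap T T1 * u) pq.1)
      = insert (P, Q) (Finset.univ.filter
        (fun pq : Fin d × Fin d => pq.1 < pq.2 ∧ u pq.2 < u pq.1)) := by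
    ext ⟨p, q⟩
    have e1 : ((u p : Fin d) : ℕ) = t ↔ (p : ℕ) = (P : ℕ) := by
      rw [← huP, Fin.val_eq_val, Fin.val_eq_val, u.apply_eq_iff_eq]
    have e2 : ((u p : Fin d) : ℕ) = t + 1 ↔ (p : ℕ) = (Q : ℕ) := by
      rw [← huQ, Fin.val_eq_val, Fin.val_eq_val, u.apply_eq_iff_eq]
    have e3 : ((u q : Fin d) : ℕ) = t ↔ (q : ℕ) = (P : ℕ) := by
      rw [← huP, Fin.val_eq_val, Fin.val_eq_val, u.apply_eq_iff_eq]
    have e4 : ((u q : Fin d) : ℕ) = t + 1 ↔ (q : ℕ) = (Q : ℕ) := by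
      rw [← huQ, Fin.val_eq_val, Fin.val_eq_val, u.apply_eq_iff_eq]
    have e5 : ((u p : Fin d) : ℕ) = ((u q : Fin d) : ℕ) ↔ (p : ℕ) = (q : ℕ) := by
      rw [Fin.val_eq_val, Fin.val_eq_val, u.apply_eq_iff_eq]
    simp only [mem_filter, mem_insert, mem_univ, true_and, Prod.mk.injEq,
      Perm.mul_apply, Fin.lt_def, Fin.ext_iff, hT, hT1, swap_val h]
    split_ifs <;> omega
  rw [N, N, key, Finset.card_insert_of_notMem]
  simp only [mem_filter, mem_univ, true_and, Fin.lt_def, huP, huQ, not_and]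
  intro _
  omega

lemma N_mul_swap_desc {t : ℕ} (h : t + 1 < d) (u : Perm (Fin d))
    (hQP : ((u⁻¹ ⟨t + 1, h⟩ : Fin d) : ℕ) < ((u⁻¹ ⟨t, Nat.lt_of_succ_lt h⟩ : Fin d) : ℕ)) :
    N u = N (Equiv.swap ⟨t, Nat.lt_of_succ_lt h⟩ ⟨t + 1, h⟩ * u) + 1 := by
  set T : Fin d := ⟨t, Nat.lt_of_succ_lt h⟩
  set T1 : Fin d := ⟨t + 1, h⟩
  have h1 : ((Equiv.swap T T1 * u)⁻¹ T : ℕ) = (u⁻¹ T1 : ℕ) := by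
    rw [mul_inv_rev, Perm.mul_apply, Equiv.swap_inv, Equiv.swap_apply_left]
  have h2 : ((Equiv.swap T T1 * u)⁻¹ T1 : ℕ) = (u⁻¹ T : ℕ) := by
    rw [mul_inv_rev, Perm.mul_apply, Equiv.swap_inv, Equiv.swap_apply_right]
  have := N_mul_swap_asc h (Equiv.swap T T1 * u) (by rw [h1, h2]; exact hQP)
  rwa [← mul_assoc, Equiv.swap_mul_self, one_mul] at this

lemma N_mul_le (s u : Perm (Fin d)) (hs : IsAdjTrans s) : N (s * u) ≤ N u + 1 := by
  obtain ⟨t, h, rfl⟩ := hs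
  rcases lt_trichotomy ((u⁻¹ ⟨t, Nat.lt_of_succ_lt h⟩ : Fin d) : ℕ)
      ((u⁻¹ ⟨t + 1, h⟩ : Fin d) : ℕ) with hlt | heq | hgt
  · exact le_of_eq (N_mul_swap_asc h u hlt)
  · exfalso
    have h1 : (u⁻¹ ⟨t, Nat.lt_of_succ_lt h⟩ : Fin d) = u⁻¹ ⟨t + 1, h⟩ := Fin.ext heq
    have h2 : (⟨t, Nat.lt_of_succ_lt h⟩ : Fin d) = ⟨t + 1, h⟩ := u⁻¹.injective h1
    have : t = t + 1 := congrArg Fin.val h2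
    omega
  · have := N_mul_swap_desc h u hgt
    omega

lemma N_le_length (l : List (Perm (Fin d))) (hl : ∀ s ∈ l, IsAdjTrans s) :
    N l.prod ≤ l.length := by
  induction l with
  | nil => simp [N_one]
  | cons s rest ih =>
    rw [List.prod_cons, List.length_cons]
    calc N (s * rest.prod) ≤ N rest.prod + 1 :=
          N_mul_le s rest.prod (hl s (List.mem_cons_self))
      _ ≤ rest.length + 1 := by
          have := ih (fun s' hs' => hl s' (List.mem_cons_of_mem s hs'))
          omega


lemma eq_one_of_no_descent (u : Perm (Fin d))
    (h : ∀ (t : ℕ) (ht : t + 1 < d),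
      ((u ⟨t, Nat.lt_of_succ_lt ht⟩ : Fin d) : ℕ) < ((u ⟨t + 1, ht⟩ : Fin d) : ℕ)) :
    u = 1 := by
  have mono : ∀ (b : ℕ) (hb : b < d) (a : ℕ) (ha : a < b),
      ((u ⟨a, lt_trans ha hb⟩ : Fin d) : ℕ) < ((u ⟨b, hb⟩ : Fin d) : ℕ) := by
    intro b
    induction b with
    | zero => intro _ a ha; omega
    | succ n ihn =>
      intro hb a ha
      rcases Nat.lt_or_ge a n with h1 | h1
      · exact lt_trans (ihn (by omega) a h1) (h n hb)
      · have : a = n := by omega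
        subst this
        exact h a hb
  have le_apply : ∀ (i : ℕ) (hi : i < d), i ≤ ((u ⟨i, hi⟩ : Fin d) : ℕ) := by
    intro i
    induction i with
    | zero => intro _; omega
    | succ n ihn =>
      intro hi
      have h1 := ihn (by omega)
      have h2 := mono (n + 1) hi n (by omega)
      omega
  have hple : ∀ j : Fin d, (j : ℕ) ≤ ((u j : Fin d) : ℕ) := by
    intro j
    have := le_apply (j : ℕ) j.isLt
    simpa using this
  have hsum : ∑ j : Fin d, (j : ℕ) = ∑ j : Fin d, ((u j : Fin d) : ℕ) :=
    (Equiv.sum_comp u (fun j : Fin d => (j : ℕ))).symm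
  have hpt := (Finset.sum_eq_sum_iff_of_le (fun j _ => hple j)).mp hsum
  ext j
  have := (hpt j (mem_univ j)).symm
  simp [this]

lemma exists_word : ∀ (n : ℕ) (u : Perm (Fin d)), N u = n →
    ∃ l : List (Perm (Fin d)), (∀ s ∈ l, IsAdjTrans s) ∧ l.length = n ∧ l.prod = u := by
  intro n
  induction n using Nat.strong_induction_on with
  | _ n ih =>
    intro u hn
    by_cases hu : u = 1
    · subst hu
      rw [N_one] at hn
      exact ⟨[], by simp, by simp [hn.symm], by simp⟩
    · have hex : ¬ ∀ (t : ℕ) (ht : t + 1 < d),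
          ((u⁻¹ ⟨t, Nat.lt_of_succ_lt ht⟩ : Fin d) : ℕ) < ((u⁻¹ ⟨t + 1, ht⟩ : Fin d) : ℕ) := by
        intro hh
        have := eq_one_of_no_descent u⁻¹ hh
        exact hu (by rw [← inv_inv u, this, inv_one])
      push_neg at hex
      obtain ⟨t, ht, hge⟩ := hex
      have hne : ((u⁻¹ ⟨t + 1, ht⟩ : Fin d) : ℕ) ≠ ((u⁻¹ ⟨t, Nat.lt_of_succ_lt ht⟩ : Fin d) : ℕ) := by
        intro hc
        have h1 : (u⁻¹ ⟨t + 1, ht⟩ : Fin d) = u⁻¹ ⟨t, Nat.lt_of_succ_lt ht⟩ := Fin.ext hc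
        have h2 := u⁻¹.injective h1
        simp only [Fin.mk.injEq] at h2
        omega
      have hgt : ((u⁻¹ ⟨t + 1, ht⟩ : Fin d) : ℕ) < ((u⁻¹ ⟨t, Nat.lt_of_succ_lt ht⟩ : Fin d) : ℕ) := by
        omega
      have hdesc := N_mul_swap_desc ht u hgt
      obtain ⟨l, hl1, hl2, hl3⟩ := ih (n - 1) (by omega)
        (Equiv.swap ⟨t, Nat.lt_of_succ_lt ht⟩ ⟨t + 1, ht⟩ * u) (by omega)
      refine ⟨Equiv.swap ⟨t, Nat.lt_of_succ_lt ht⟩ ⟨t + 1, ht⟩ :: l, ?_, ?_, ?_⟩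
      · intro s hs
        rcases List.mem_cons.mp hs with rfl | hs'
        · exact ⟨t, ht, rfl⟩
        · exact hl1 s hs'
      · simp only [List.length_cons, hl2]; omega
      · rw [List.prod_cons, hl3, ← mul_assoc, Equiv.swap_mul_self, one_mul]

lemma len_mem_helper (u : Perm (Fin d)) :
    ∃ l : List (Perm (Fin d)), (∀ s ∈ l, IsAdjTrans s) ∧ l.length = N u ∧ l.prod = u :=
  exists_word (N u) u rfl

lemma R_antitone (u : Perm (Fin d)) (a b : ℕ) : R u a (b + 1) ≤ R u a b := by
  apply Finset.card_le_card
  intro i' hi'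
  simp only [mem_filter, mem_univ, true_and] at hi' ⊢
  omega

lemma R_step_val (u : Perm (Fin d)) (a b : ℕ) (hb : b < d) :
    R u a b = R u a (b + 1) + (if ((u⁻¹ ⟨b, hb⟩ : Fin d) : ℕ) < a then 1 else 0) := by
  have huP : ((u (u⁻¹ ⟨b, hb⟩) : Fin d) : ℕ) = b := by rw [Perm.inv_def, Equiv.apply_symm_apply]
  have hiff : ∀ i' : Fin d, ((u i' : Fin d) : ℕ) = b ↔ i' = u⁻¹ ⟨b, hb⟩ := by
    intro i'
    constructor
    · intro hval
      have h1 : u i' = ⟨b, hb⟩ := Fin.ext hval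
      rw [← h1, Perm.inv_def, Equiv.symm_apply_apply]
    · rintro rfl
      exact huP
  by_cases hPa : ((u⁻¹ ⟨b, hb⟩ : Fin d) : ℕ) < a
  · rw [if_pos hPa]
    have key : Finset.univ.filter (fun i' : Fin d => (i' : ℕ) < a ∧ b ≤ (u i' : ℕ))
        = insert (u⁻¹ ⟨b, hb⟩) (Finset.univ.filter
            (fun i' : Fin d => (i' : ℕ) < a ∧ b + 1 ≤ (u i' : ℕ))) := by
      ext i'
      simp only [mem_filter, mem_insert, mem_univ, true_and]
      constructor
      · rintro ⟨h1, h2⟩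
        rcases Nat.eq_or_lt_of_le h2 with heq | hlt
        · exact Or.inl ((hiff i').mp heq.symm)
        · exact Or.inr ⟨h1, hlt⟩
      · rintro (rfl | ⟨h1, h2⟩)
        · exact ⟨hPa, le_of_eq huP.symm⟩
        · exact ⟨h1, by omega⟩
    rw [R, R, key, Finset.card_insert_of_notMem]
    simp only [mem_filter, mem_univ, true_and, huP, not_and]
    intro _
    omega
  · rw [if_neg hPa, add_zero]
    unfold R
    congr 1
    ext i'
    simp only [mem_filter, mem_univ, true_and]
    constructor
    · rintro ⟨h1, h2⟩
      refine ⟨h1, ?_⟩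
      rcases Nat.eq_or_lt_of_le h2 with heq | hlt
      · exact absurd (((hiff i').mp heq.symm) ▸ h1) hPa
      · exact hlt
    · rintro ⟨h1, h2⟩
      exact ⟨h1, by omega⟩

lemma R_step_pos (u : Perm (Fin d)) (a b : ℕ) (ha : a < d) :
    R u (a + 1) b = R u a b + (if b ≤ ((u ⟨a, ha⟩ : Fin d) : ℕ) then 1 else 0) := by
  by_cases hb : b ≤ ((u ⟨a, ha⟩ : Fin d) : ℕ)
  · rw [if_pos hb]
    have key : Finset.univ.filter (fun i' : Fin d => (i' : ℕ) < a + 1 ∧ b ≤ (u i' : ℕ))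
        = insert (⟨a, ha⟩ : Fin d) (Finset.univ.filter
            (fun i' : Fin d => (i' : ℕ) < a ∧ b ≤ (u i' : ℕ))) := by
      ext i'
      simp only [mem_filter, mem_insert, mem_univ, true_and, Fin.ext_iff, Fin.val_mk]
      constructor
      · rintro ⟨h1, h2⟩
        rcases Nat.lt_or_ge (i' : ℕ) a with hlt | hge
        · exact Or.inr ⟨hlt, h2⟩
        · exact Or.inl (by omega)
      · rintro (h1 | ⟨h1, h2⟩)
        · have h3 : i' = (⟨a, ha⟩ : Fin d) := Fin.ext h1
          subst h3
          refine ⟨?_, hb⟩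
          rw [Fin.val_mk]
          omega
        · exact ⟨by omega, h2⟩
    rw [R, R, key, Finset.card_insert_of_notMem]
    simp only [mem_filter, mem_univ, true_and, not_and, Fin.val_mk]
    intro hc
    omega
  · rw [if_neg hb, add_zero]
    unfold R
    congr 1
    ext i'
    simp only [mem_filter, mem_univ, true_and]
    constructor
    · rintro ⟨h1, h2⟩
      refine ⟨?_, h2⟩
      rcases Nat.lt_or_ge (i' : ℕ) a with hlt | hge
      · exact hlt
      · exfalso
        have h3 : i' = (⟨a, ha⟩ : Fin d) := Fin.ext (show (i' : ℕ) = a by omega)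
        subst h3
        exact hb h2
    · rintro ⟨h1, h2⟩
      exact ⟨by omega, h2⟩

lemma R_mul_swap_ne {t : ℕ} (h : t + 1 < d) (u : Perm (Fin d)) (a b : ℕ) (hb : b ≠ t + 1) :
    R (Equiv.swap ⟨t, Nat.lt_of_succ_lt h⟩ ⟨t + 1, h⟩ * u) a b = R u a b := by
  unfold R
  congr 1
  ext i'
  rw [mem_filter, mem_filter]
  simp only [mem_univ, true_and, Perm.mul_apply]
  have hv := swap_val h (u i')
  rw [hv]
  have : (u i' : ℕ) < d := (u i').isLt
  split_ifs <;> omega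

lemma R_mul_swap_top {t : ℕ} (h : t + 1 < d) (u : Perm (Fin d)) (a : ℕ) :
    R (Equiv.swap ⟨t, Nat.lt_of_succ_lt h⟩ ⟨t + 1, h⟩ * u) a (t + 1)
      = R u a (t + 2) + (if ((u⁻¹ ⟨t, Nat.lt_of_succ_lt h⟩ : Fin d) : ℕ) < a then 1 else 0) := by
  have hstep := R_step_val (Equiv.swap ⟨t, Nat.lt_of_succ_lt h⟩ ⟨t + 1, h⟩ * u) a (t + 1) h
  have hinv : ((Equiv.swap (⟨t, Nat.lt_of_succ_lt h⟩ : Fin d) ⟨t + 1, h⟩ * u)⁻¹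
        (⟨t + 1, h⟩ : Fin d)) = u⁻¹ ⟨t, Nat.lt_of_succ_lt h⟩ := by
    rw [mul_inv_rev, Perm.mul_apply, Equiv.swap_inv, Equiv.swap_apply_right]
  rw [hinv] at hstep
  rw [hstep, R_mul_swap_ne h u a (t + 2) (by omega)]

lemma R_le_swap_mul {t : ℕ} (h : t + 1 < d) (u : Perm (Fin d))
    (hPQ : ((u⁻¹ ⟨t, Nat.lt_of_succ_lt h⟩ : Fin d) : ℕ) < ((u⁻¹ ⟨t + 1, h⟩ : Fin d) : ℕ))
    (a b : ℕ) :
    R u a b ≤ R (Equiv.swap ⟨t, Nat.lt_of_succ_lt h⟩ ⟨t + 1, h⟩ * u) a b := by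
  by_cases hb : b = t + 1
  · subst hb
    rw [R_mul_swap_top h u a, R_step_val u a (t + 1) h]
    simp only [show t + 1 + 1 = t + 2 by omega]
    split_ifs <;> omega
  · rw [R_mul_swap_ne h u a b hb]

lemma R_swap_mul_le {t : ℕ} (h : t + 1 < d) (u v : Perm (Fin d))
    (hPQ : ((v⁻¹ ⟨t, Nat.lt_of_succ_lt h⟩ : Fin d) : ℕ) < ((v⁻¹ ⟨t + 1, h⟩ : Fin d) : ℕ))
    (hle : ∀ a b, R u a b ≤ R v a b) (a b : ℕ) :
    R (Equiv.swap ⟨t, Nat.lt_of_succ_lt h⟩ ⟨t + 1, h⟩ * u) a b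
      ≤ R (Equiv.swap ⟨t, Nat.lt_of_succ_lt h⟩ ⟨t + 1, h⟩ * v) a b := by
  by_cases hb : b = t + 1
  · subst hb
    rw [R_mul_swap_top h u a, R_mul_swap_top h v a]
    by_cases hpa : ((u⁻¹ ⟨t, Nat.lt_of_succ_lt h⟩ : Fin d) : ℕ) < a
    · by_cases hPa : ((v⁻¹ ⟨t, Nat.lt_of_succ_lt h⟩ : Fin d) : ℕ) < a
      · have := hle a (t + 2)
        rw [if_pos hpa, if_pos hPa]
        omega
      · -- hard case
        have hQa : ¬ ((v⁻¹ ⟨t + 1, h⟩ : Fin d) : ℕ) < a := by omega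
        have e1 : R u a t = R u a (t + 1)
            + (if ((u⁻¹ ⟨t, Nat.lt_of_succ_lt h⟩ : Fin d) : ℕ) < a then 1 else 0) :=
          R_step_val u a t (Nat.lt_of_succ_lt h)
        have e1' : R u a (t + 1) = R u a (t + 2)
            + (if ((u⁻¹ ⟨t + 1, h⟩ : Fin d) : ℕ) < a then 1 else 0) :=
          R_step_val u a (t + 1) h
        have e2 : R v a t = R v a (t + 1)
            + (if ((v⁻¹ ⟨t, Nat.lt_of_succ_lt h⟩ : Fin d) : ℕ) < a then 1 else 0) :=
          R_step_val v a t (Nat.lt_of_succ_lt h)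
        have e2' : R v a (t + 1) = R v a (t + 2)
            + (if ((v⁻¹ ⟨t + 1, h⟩ : Fin d) : ℕ) < a then 1 else 0) :=
          R_step_val v a (t + 1) h
        have hlet := hle a t
        rw [if_pos hpa] at e1
        rw [if_neg hPa] at e2
        rw [if_neg hQa] at e2'
        rw [if_pos hpa, if_neg hPa]
        by_cases hqa : ((u⁻¹ ⟨t + 1, h⟩ : Fin d) : ℕ) < a
        · rw [if_pos hqa] at e1'
          omega
        · rw [if_neg hqa] at e1'
          omega
    · rw [if_neg hpa, add_zero]
      calc R u a (t + 2) ≤ R v a (t + 2) := hle a (t + 2)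
        _ ≤ R v a (t + 2) + _ := Nat.le_add_right _ _
  · rw [R_mul_swap_ne h u a b hb, R_mul_swap_ne h v a b hb]
    exact hle a b

lemma R_sublist_le : ∀ l : List (Perm (Fin d)), (∀ s ∈ l, IsAdjTrans s) →
    N l.prod = l.length → ∀ l' : List (Perm (Fin d)), l'.Sublist l → ∀ a b, R l'.prod a b ≤ R l.prod a b := by
  intro l
  induction l with
  | nil =>
    intro _ _ l' hsub a b
    rw [List.sublist_nil.mp hsub]
  | cons s rest ih =>
    intro hadj hred l' hsub a b
    obtain ⟨t, ht, hs⟩ := hadj s (List.mem_cons_self)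
    have hadj' : ∀ s' ∈ rest, IsAdjTrans s' := fun s' hs' => hadj s' (List.mem_cons_of_mem s hs')
    have h1 : N rest.prod ≤ rest.length := N_le_length rest hadj'
    have hred2 : N (Equiv.swap (⟨t, Nat.lt_of_succ_lt ht⟩ : Fin d) ⟨t + 1, ht⟩ * rest.prod)
        = rest.length + 1 := by
      rw [← hs, ← List.prod_cons]
      rw [hred, List.length_cons]
    have hPQ : ((rest.prod⁻¹ ⟨t, Nat.lt_of_succ_lt ht⟩ : Fin d) : ℕ)
        < ((rest.prod⁻¹ ⟨t + 1, ht⟩ : Fin d) : ℕ) := by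
      rcases lt_trichotomy ((rest.prod⁻¹ ⟨t, Nat.lt_of_succ_lt ht⟩ : Fin d) : ℕ)
          ((rest.prod⁻¹ ⟨t + 1, ht⟩ : Fin d) : ℕ) with hlt | heq | hgt
      · exact hlt
      · exfalso
        have hh1 : (rest.prod⁻¹ ⟨t, Nat.lt_of_succ_lt ht⟩ : Fin d)
            = rest.prod⁻¹ ⟨t + 1, ht⟩ := Fin.ext heq
        have hh2 := rest.prod⁻¹.injective hh1
        simp only [Fin.mk.injEq] at hh2
        omega
      · exfalso
        have := N_mul_swap_desc ht rest.prod hgt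
        omega
    have hasc := N_mul_swap_asc ht rest.prod hPQ
    have hred' : N rest.prod = rest.length := by omega
    cases hsub with
    | cons _ hsub' =>
      calc R l'.prod a b ≤ R rest.prod a b := ih hadj' hred' l' hsub' a b
        _ ≤ R ((s :: rest).prod) a b := by
            rw [List.prod_cons, hs]
            exact R_le_swap_mul ht rest.prod hPQ a b
    | cons_cons =>
      rename_i l₂ hsub'
      rw [List.prod_cons, List.prod_cons, hs]
      exact R_swap_mul_le ht l₂.prod rest.prod hPQ
        (fun a' b' => ih hadj' hred' l₂ hsub' a' b') a b

lemma R_mono_of_bruhat {d : ℕ} {y w : Perm (Fin d)} (hyw : BruhatLE y w) (a b : ℕ) :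
    R y a b ≤ R w a b := by
  obtain ⟨l, hadj, hlen, hprod, l', hsub, hprod'⟩ := hyw
  have hmem : len w ≤ N w := by
    obtain ⟨l₀, h₀adj, h₀len, h₀prod⟩ := len_mem_helper w
    exact Nat.sInf_le ⟨l₀, h₀len, h₀adj, h₀prod⟩
  have h2 : N l.prod = l.length := by
    apply le_antisymm (N_le_length l hadj)
    rw [hprod, hlen]
    exact hmem
  calc R y a b = R l'.prod a b := by rw [hprod']
    _ ≤ R l.prod a b := R_sublist_le l hadj h2 l' hsub a b
    _ = R w a b := by rw [hprod]

lemma invi_eq_R {d : ℕ} (u : Perm (Fin d)) (i : Fin d) :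
    invi u i = R u (i : ℕ) (((u i : Fin d) : ℕ) + 1) := by
  unfold invi R
  congr 1

theorem stmt5_aux (d : ℕ) (y w : Perm (Fin d)) (i : Fin d)
    (hyw : BruhatLE y w) (hval : y i = w i) (hinv : invi y i = invi w i)
    (x : Perm (Fin d)) (hyx : BruhatLE y x) (hxw : BruhatLE x w) :
    x i = y i ∧ invi x i = invi y i := by
  have hRyx : ∀ a b, R y a b ≤ R x a b := fun a b => R_mono_of_bruhat hyx a b
  have hRxw : ∀ a b, R x a b ≤ R w a b := fun a b => R_mono_of_bruhat hxw a b
  have hcd : ((y i : Fin d) : ℕ) < d := (y i).isLt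
  have hid : (i : ℕ) < d := i.isLt
  have hwval : ((w i : Fin d) : ℕ) = ((y i : Fin d) : ℕ) := by rw [hval]
  -- equality of ranks of y and w at (i, c+1)
  have hyw' : R y (i : ℕ) (((y i : Fin d) : ℕ) + 1) = R w (i : ℕ) (((y i : Fin d) : ℕ) + 1) := by
    have h1 := invi_eq_R y i
    have h2 := invi_eq_R w i
    rw [hwval] at h2
    rw [← h1, ← h2, hinv]
  -- squeeze at (i, c+1)
  have h1 : R x (i : ℕ) (((y i : Fin d) : ℕ) + 1) = R y (i : ℕ) (((y i : Fin d) : ℕ) + 1) :=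
    le_antisymm ((hRxw _ _).trans_eq hyw'.symm) (hRyx _ _)
  -- step lemmas at position i, threshold c+1
  have sy := R_step_pos y (i : ℕ) (((y i : Fin d) : ℕ) + 1) hid
  have sw := R_step_pos w (i : ℕ) (((y i : Fin d) : ℕ) + 1) hid
  have sx := R_step_pos x (i : ℕ) (((y i : Fin d) : ℕ) + 1) hid
  simp only [Fin.eta] at sy sw sx
  rw [if_neg (by omega)] at sy
  rw [if_neg (by rw [hwval]; omega)] at sw
  -- squeeze at (i+1, c+1)
  have h2 : R x ((i : ℕ) + 1) (((y i : Fin d) : ℕ) + 1) = R y (i : ℕ) (((y i : Fin d) : ℕ) + 1) := by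
    have hub : R x ((i : ℕ) + 1) (((y i : Fin d) : ℕ) + 1) ≤ R y (i : ℕ) (((y i : Fin d) : ℕ) + 1) := by
      calc R x ((i : ℕ) + 1) (((y i : Fin d) : ℕ) + 1)
          ≤ R w ((i : ℕ) + 1) (((y i : Fin d) : ℕ) + 1) := hRxw _ _
        _ = R w (i : ℕ) (((y i : Fin d) : ℕ) + 1) := by rw [sw, add_zero]
        _ = R y (i : ℕ) (((y i : Fin d) : ℕ) + 1) := hyw'.symm
    have hlb : R y (i : ℕ) (((y i : Fin d) : ℕ) + 1) ≤ R x ((i : ℕ) + 1) (((y i : Fin d) : ℕ) + 1) := by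
      calc R y (i : ℕ) (((y i : Fin d) : ℕ) + 1)
          = R y ((i : ℕ) + 1) (((y i : Fin d) : ℕ) + 1) := by rw [sy, add_zero]
        _ ≤ R x ((i : ℕ) + 1) (((y i : Fin d) : ℕ) + 1) := hRyx _ _
    exact le_antisymm hub hlb
  have hxle : ¬ (((y i : Fin d) : ℕ) + 1 ≤ ((x i : Fin d) : ℕ)) := by
    intro hcon
    rw [if_pos hcon] at sx
    omega
  -- value-level steps at threshold c
  have vy := R_step_val y (i : ℕ) ((y i : Fin d) : ℕ) hcd
  have hyinv : (y⁻¹ (⟨((y i : Fin d) : ℕ), hcd⟩ : Fin d)) = i := by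
    rw [Fin.eta, Perm.inv_def, Equiv.symm_apply_apply]
  rw [hyinv, if_neg (by omega), add_zero] at vy
  have vw := R_step_val w (i : ℕ) ((y i : Fin d) : ℕ) hcd
  have hwinv : (w⁻¹ (⟨((y i : Fin d) : ℕ), hcd⟩ : Fin d)) = i := by
    rw [Fin.eta, hval, Perm.inv_def, Equiv.symm_apply_apply]
  rw [hwinv, if_neg (by omega), add_zero] at vw
  have vy1 := R_step_pos y (i : ℕ) ((y i : Fin d) : ℕ) hid
  have vw1 := R_step_pos w (i : ℕ) ((y i : Fin d) : ℕ) hid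
  have vx1 := R_step_pos x (i : ℕ) ((y i : Fin d) : ℕ) hid
  simp only [Fin.eta] at vy1 vw1 vx1
  rw [if_pos (le_refl _)] at vy1
  rw [if_pos (by rw [hwval])] at vw1
  -- squeeze at (i+1, c)
  have hx1 : R x ((i : ℕ) + 1) ((y i : Fin d) : ℕ) = R y (i : ℕ) ((y i : Fin d) : ℕ) + 1 := by
    have hub : R x ((i : ℕ) + 1) ((y i : Fin d) : ℕ) ≤ R y (i : ℕ) ((y i : Fin d) : ℕ) + 1 := by
      calc R x ((i : ℕ) + 1) ((y i : Fin d) : ℕ)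
          ≤ R w ((i : ℕ) + 1) ((y i : Fin d) : ℕ) := hRxw _ _
        _ = R w (i : ℕ) ((y i : Fin d) : ℕ) + 1 := vw1
        _ = R y (i : ℕ) ((y i : Fin d) : ℕ) + 1 := by rw [vw, ← hyw', ← vy]
    have hlb : R y (i : ℕ) ((y i : Fin d) : ℕ) + 1 ≤ R x ((i : ℕ) + 1) ((y i : Fin d) : ℕ) := by
      calc R y (i : ℕ) ((y i : Fin d) : ℕ) + 1
          = R y ((i : ℕ) + 1) ((y i : Fin d) : ℕ) := vy1.symm
        _ ≤ R x ((i : ℕ) + 1) ((y i : Fin d) : ℕ) := hRyx _ _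
    exact le_antisymm hub hlb
  -- squeeze at (i, c)
  have hx0 : R x (i : ℕ) ((y i : Fin d) : ℕ) = R y (i : ℕ) ((y i : Fin d) : ℕ) := by
    have hub : R x (i : ℕ) ((y i : Fin d) : ℕ) ≤ R y (i : ℕ) ((y i : Fin d) : ℕ) := by
      calc R x (i : ℕ) ((y i : Fin d) : ℕ)
          ≤ R w (i : ℕ) ((y i : Fin d) : ℕ) := hRxw _ _
        _ = R y (i : ℕ) ((y i : Fin d) : ℕ) := by rw [vw, ← hyw', ← vy]
    have hlb : R y (i : ℕ) ((y i : Fin d) : ℕ) ≤ R x (i : ℕ) ((y i : Fin d) : ℕ) := by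
      calc R y (i : ℕ) ((y i : Fin d) : ℕ)
          = R y (i : ℕ) (((y i : Fin d) : ℕ) + 1) := vy
        _ = R x (i : ℕ) (((y i : Fin d) : ℕ) + 1) := h1.symm
        _ ≤ R x (i : ℕ) ((y i : Fin d) : ℕ) := R_antitone x (i : ℕ) _
    exact le_antisymm hub hlb
  have hxge : ((y i : Fin d) : ℕ) ≤ ((x i : Fin d) : ℕ) := by
    by_contra hcon
    rw [if_neg hcon, add_zero] at vx1
    omega
  have hxeq : x i = y i := Fin.ext (by omega)
  refine ⟨hxeq, ?_⟩
  rw [invi_eq_R x i, invi_eq_R y i, hxeq, h1]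

end Stmt5Aux


/-- if `i` is cancellable for `[y,w]`, then every `x` in the Bruhat
interval `[y,w]` satisfies `x(i) = y(i)` and `inv_i(x) = inv_i(y)`. -/
theorem stmt5 (d : ℕ) (y w : Perm (Fin d)) (i : Fin d)
    (hyw : BruhatLE y w) (hval : y i = w i) (hinv : invi y i = invi w i)
    (x : Perm (Fin d)) (hyx : BruhatLE y x) (hxw : BruhatLE x w) :
    x i = y i ∧ invi x i = invi y i :=
  Stmt5Aux.stmt5_aux d y w i hyw hval hinv x hyx hxw
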